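/- Let (W_n; n ≥ 0) be a random walk on the integers started at 0 whose jump distribution ν is supported on {-1, 0, 1, 2, ...} (i.e., jumps are at least -1). Then for every positive integer p, p · P(ζ = p) = P(W_p = -1), where ζ = inf{ n ≥ 0 : W_n = -1 }. -/

import Mathlib

open MeasureTheory
open Fin.NatCast

private lemma cycle_core (p : ℕ) (hp : 1 ≤ p) (s : ℕ → ℤ)
    (h0 : s 0 = 0) (hstep : ∀ n, s n - 1 ≤ s (n + 1)) (hper : ∀ n, s (n + p) = s n - 1) :
    ∃! j : ℕ, j < p ∧ ∀ k < p, s (j + k) ≠ s j - 1 := by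
  classical
  have equiv : ∀ j, (∀ k < p, s (j + k) ≠ s j - 1) ↔ (∀ k < p, s j ≤ s (j + k)) := by
    intro j
    constructor
    · intro h
      by_contra hc
      push_neg at hc
      have hex : ∃ k, k < p ∧ s (j + k) < s j := by
        obtain ⟨k, hk1, hk2⟩ := hc; exact ⟨k, hk1, lt_of_not_ge (by simpa using hk2)⟩
      obtain ⟨k₀, ⟨hk₀p, hk₀lt⟩, hk₀min⟩ :
          ∃ k₀, (k₀ < p ∧ s (j + k₀) < s j) ∧ ∀ m < k₀, ¬(m < p ∧ s (j + m) < s j) :=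
        ⟨Nat.find hex, Nat.find_spec hex, fun m hm => Nat.find_min hex hm⟩
      have hk₀pos : k₀ ≠ 0 := by rintro rfl; simp at hk₀lt
      have h1 : s j ≤ s (j + (k₀ - 1)) := by
        by_contra hc2
        exact hk₀min (k₀ - 1) (by omega) ⟨by omega, lt_of_not_ge hc2⟩
      have h2 : s (j + (k₀ - 1)) - 1 ≤ s (j + k₀) := by
        have he : j + (k₀ - 1) + 1 = j + k₀ := by omega
        have := hstep (j + (k₀ - 1)); rwa [he] at this
      exact h k₀ hk₀p (by omega)
    · intro h k hk
      have := h k hk; omega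
  have hexmin : ∃ j', (1 ≤ j' ∧ j' ≤ p ∧ ∀ l, 1 ≤ l → l ≤ p → s j' ≤ s l) ∧
      ∀ r < j', ¬(1 ≤ r ∧ r ≤ p ∧ ∀ l, 1 ≤ l → l ≤ p → s r ≤ s l) := by
    have hne : ∃ k, 1 ≤ k ∧ k ≤ p ∧ ∀ l, 1 ≤ l → l ≤ p → s k ≤ s l := by
      obtain ⟨k, hk, hmin⟩ := (Finset.Icc 1 p).exists_min_image s ⟨1, by simp [hp]⟩
      simp only [Finset.mem_Icc] at hk hmin
      exact ⟨k, hk.1, hk.2, fun l h1 h2 => hmin l ⟨h1, h2⟩⟩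
    exact ⟨Nat.find hne, Nat.find_spec hne, fun r hr => Nat.find_min hne hr⟩
  obtain ⟨j', ⟨hj1, hj2, hjmin⟩, hjleast'⟩ := hexmin
  have hleast : ∀ r, 1 ≤ r → r < j' → s j' + 1 ≤ s r := by
    intro r h1 h2
    have hnot := hjleast' r h2
    push_neg at hnot
    obtain ⟨l, hl1, hl2, hl3⟩ := hnot h1 (by omega)
    have := hjmin l hl1 hl2
    omega
  have hsp : s p = -1 := by have := hper 0; rw [h0] at this; simpa using this
  have hgood : ∀ k < p, s (j' % p) ≤ s (j' % p + k) := by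
    intro k hk
    rcases eq_or_lt_of_le hj2 with hjp | hjp
    · have hm0 : j' % p = 0 := by rw [hjp]; simp
      rw [hm0, zero_add, h0]
      rcases Nat.eq_zero_or_pos k with rfl | hk0
      · rw [h0]
      · have := hleast k hk0 (by omega)
        rw [hjp] at this
        omega
    · have hmod : j' % p = j' := Nat.mod_eq_of_lt hjp
      rw [hmod]
      rcases Nat.eq_zero_or_pos k with rfl | hk0
      · simp
      rcases le_or_gt (j' + k) p with hle | hgt
      · exact hjmin (j' + k) (by omega) hle
      · have hr : j' + k = (j' + k - p) + p := by omega
        rw [hr, hper]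
        have := hleast (j' + k - p) (by omega) (by omega)
        omega
  have huniq : ∀ a b, a < p → b < p → (∀ k < p, s a ≤ s (a + k)) →
      (∀ k < p, s b ≤ s (b + k)) → a = b := by
    intro a b ha hb hga hgb
    by_contra hab
    rcases Nat.lt_or_ge a b with h | h
    · have h1 : s a ≤ s b := by
        have := hga (b - a) (by omega); rwa [Nat.add_sub_cancel' (le_of_lt h)] at this
      have h2 : s b ≤ s (a + p) := by
        have := hgb (a + p - b) (by omega)
        have he : b + (a + p - b) = a + p := by omega
        rwa [he] at this
      rw [hper] at h2; omega
    · have hlt : b < a := by omega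
      have h1 : s b ≤ s a := by
        have := hgb (a - b) (by omega); rwa [Nat.add_sub_cancel' (le_of_lt hlt)] at this
      have h2 : s a ≤ s (b + p) := by
        have := hga (b + p - a) (by omega)
        have he : a + (b + p - a) = b + p := by omega
        rwa [he] at this
      rw [hper] at h2; omega
  refine ⟨j' % p, ⟨Nat.mod_lt _ (by omega), (equiv _).mpr hgood⟩, ?_⟩
  intro j ⟨hjp, hgood'⟩
  exact huniq j (j' % p) hjp (Nat.mod_lt _ (by omega)) ((equiv _).mp hgood') hgood

private def Sfd {p : ℕ} [NeZero p] (k : ℕ) (x : Fin p → ℤ) : ℤ :=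
  ∑ i ∈ Finset.range k, x (i : Fin p)

private lemma Sfd_zero {p : ℕ} [NeZero p] (x : Fin p → ℤ) : Sfd 0 x = 0 := by
  simp [Sfd]

private lemma Sfd_succ {p : ℕ} [NeZero p] (n : ℕ) (x : Fin p → ℤ) :
    Sfd (n + 1) x = Sfd n x + x (n : Fin p) := by
  simp [Sfd, Finset.sum_range_succ]

private lemma Sfd_per {p : ℕ} [NeZero p] (n : ℕ) (x : Fin p → ℤ) :
    Sfd (n + p) x = Sfd n x + Sfd p x := by
  induction n with
  | zero => simp [Sfd_zero]
  | succ n ih =>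
    have h1 : n + 1 + p = (n + p) + 1 := by omega
    rw [h1, Sfd_succ, ih, Sfd_succ]
    have he : ((n + p : ℕ) : Fin p) = (n : Fin p) := by
      push_cast
      simp
    rw [he]; ring

private lemma Sfd_rot {p : ℕ} [NeZero p] (j : Fin p) (k : ℕ) (x : Fin p → ℤ) :
    Sfd k (fun i => x (i + j)) = Sfd (j.val + k) x - Sfd j.val x := by
  induction k with
  | zero => simp [Sfd_zero]
  | succ k ih =>
    rw [Sfd_succ, ih]
    have h1 : j.val + (k + 1) = (j.val + k) + 1 := by omega
    rw [h1, Sfd_succ]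
    have he : ((k : Fin p) + j) = ((j.val + k : ℕ) : Fin p) := by
      push_cast
      exact add_comm _ _
    rw [he]; ring

private lemma exists_unique_rot {p : ℕ} [NeZero p] (x : Fin p → ℤ)
    (hG : ∀ i, -1 ≤ x i) (hC : Sfd p x = -1) :
    ∃! j : Fin p, (Sfd p (fun i => x (i + j)) = -1 ∧
      ∀ k < p, Sfd k (fun i => x (i + j)) ≠ -1) := by
  have hp : 1 ≤ p := Nat.one_le_iff_ne_zero.mpr (NeZero.ne p)
  have hcore := cycle_core p hp (fun n => Sfd n x) (Sfd_zero x)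
    (fun n => by show Sfd n x - 1 ≤ Sfd (n + 1) x; rw [Sfd_succ]; have := hG (n : Fin p); omega)
    (fun n => by show Sfd (n + p) x = Sfd n x - 1; rw [Sfd_per]; omega)
  obtain ⟨j, ⟨hjp, hjgood⟩, huniq⟩ := hcore
  have hQ : ∀ b : Fin p, (Sfd p (fun i => x (i + b)) = -1 ∧
      ∀ k < p, Sfd k (fun i => x (i + b)) ≠ -1) ↔
      (∀ k < p, Sfd (b.val + k) x ≠ Sfd b.val x - 1) := by
    intro b
    constructor
    · rintro ⟨_, h2⟩ k hk
      have := h2 k hk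
      rw [Sfd_rot] at this
      omega
    · intro h
      refine ⟨?_, fun k hk => ?_⟩
      · rw [Sfd_rot, Sfd_per]; omega
      · rw [Sfd_rot]
        have := h k hk
        omega
  refine ⟨⟨j, hjp⟩, (hQ ⟨j, hjp⟩).mpr hjgood, fun b hb => ?_⟩
  exact Fin.ext (huniq b.val ⟨b.isLt, (hQ b).mp hb⟩)

/-- Otter's formula / cycle lemma: for a random walk `W` started at `0`
whose i.i.d. jumps are at least `-1` (law `ν` with `ν((-∞,-2]) = 0`), for every
positive integer `p`, `p · P(ζ = p) = P(W_p = -1)`, where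
`ζ = inf { n ≥ 0 : W_n = -1 }`. -/
theorem otter_cycle_lemma {Ω : Type*} [MeasurableSpace Ω] (P : Measure Ω)
    [IsProbabilityMeasure P]
    (ν : Measure ℤ) [IsProbabilityMeasure ν] (hν : ν {k : ℤ | k < -1} = 0)
    (ξ : ℕ → Ω → ℤ) (hmeas : ∀ i, Measurable (ξ i))
    (hindep : ProbabilityTheory.iIndepFun ξ P)
    (hdist : ∀ i, Measure.map (ξ i) P = ν)
    (W : ℕ → Ω → ℤ) (hW : ∀ n ω, W n ω = ∑ i ∈ Finset.range n, ξ i ω)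
    (ζ : Ω → ℕ) (hζ : ∀ ω, ζ ω = sInf {n : ℕ | W n ω = -1})
    (p : ℕ) (hp : 1 ≤ p) :
    (p : ENNReal) * P {ω | ζ ω = p} = P {ω | W p ω = -1} := by
  classical
  haveI : NeZero p := ⟨by omega⟩
  set J : Ω → (Fin p → ℤ) := fun ω i => ξ i ω with hJ
  have hJmeas : Measurable J := measurable_pi_lambda _ fun i => hmeas i
  set μ : Measure (Fin p → ℤ) := P.map J with hμ
  have mall : ∀ s : Set (Fin p → ℤ), MeasurableSet s := fun s => s.to_countable.measurableSet
  -- singleton formula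
  have hsing : ∀ x : Fin p → ℤ, μ {x} = ∏ i : Fin p, ν {x i} := by
    intro x
    have hpre : J ⁻¹' {x} = ⋂ i ∈ Finset.range p,
        ξ i ⁻¹' {x ((i : ℕ) : Fin p)} := by
      ext ω
      simp only [Set.mem_preimage, Set.mem_singleton_iff, Set.mem_iInter, funext_iff,
        Finset.mem_range]
      constructor
      · intro h i hi
        have he : ((i : ℕ) : Fin p) = ⟨i, hi⟩ := by
          apply Fin.ext; simp [Fin.val_natCast, Nat.mod_eq_of_lt hi]
        have h2 := h ⟨i, hi⟩
        simp only [Set.mem_preimage, Set.mem_singleton_iff, he]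
        exact h2
      · intro h i
        have h2 := h i.val i.isLt
        have he : ((i.val : ℕ) : Fin p) = i := by
          apply Fin.ext; simp [Fin.val_natCast, Nat.mod_eq_of_lt i.isLt]
        rwa [he] at h2
    rw [hμ, Measure.map_apply hJmeas (mall _), hpre,
      hindep.measure_inter_preimage_eq_mul (Finset.range p)
        (fun i _ => measurableSet_singleton _)]
    have hterm : ∀ i ∈ Finset.range p,
        P (ξ i ⁻¹' {x ((i : ℕ) : Fin p)}) = ν {x ((i : ℕ) : Fin p)} := by
      intro i _
      rw [← hdist i, Measure.map_apply (hmeas i) (measurableSet_singleton _)]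
    rw [Finset.prod_congr rfl hterm]
    rw [← Fin.prod_univ_eq_prod_range (fun i => ν {x ((i : ℕ) : Fin p)}) p]
    refine Finset.prod_congr rfl fun i _ => ?_
    have he : ((i.val : ℕ) : Fin p) = i :=
      Fin.ext (by simp [Fin.val_natCast, Nat.mod_eq_of_lt i.isLt])
    rw [he]
  haveI : IsProbabilityMeasure μ := Measure.isProbabilityMeasure_map hJmeas.aemeasurable
  -- rotation invariance
  have hrotinv : ∀ (e : Fin p ≃ Fin p) (s : Set (Fin p → ℤ)),
      μ ((fun x => x ∘ e) ⁻¹' s) = μ s := by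
    intro e s
    have hrm : Measurable (fun x : Fin p → ℤ => x ∘ e) :=
      measurable_pi_lambda _ fun i => measurable_pi_apply _
    have hmapeq : μ.map (fun x : Fin p → ℤ => x ∘ e) = μ := by
      apply Measure.ext_of_singleton
      intro a
      rw [Measure.map_apply hrm (mall _)]
      have hpre : (fun x : Fin p → ℤ => x ∘ e) ⁻¹' {a} = {a ∘ e.symm} := by
        ext x
        simp only [Set.mem_preimage, Set.mem_singleton_iff, funext_iff, Function.comp_apply]
        constructor
        · intro h i; rw [← h (e.symm i), Equiv.apply_symm_apply]
        · intro h i; rw [h (e i), Equiv.symm_apply_apply]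
      rw [hpre, hsing, hsing]
      exact Equiv.prod_comp e.symm (fun i => ν {a i})
    conv_rhs => rw [← hmapeq]
    rw [Measure.map_apply hrm (mall _)]
  -- events
  set B : Set (Fin p → ℤ) := {x | Sfd p x = -1 ∧ ∀ k < p, Sfd k x ≠ -1} with hB
  set C : Set (Fin p → ℤ) := {x | Sfd p x = -1} with hC
  set G : Set (Fin p → ℤ) := {x | ∀ i, -1 ≤ x i} with hG
  have hSfW : ∀ (k : ℕ), k ≤ p → ∀ ω, Sfd k (J ω) = W k ω := by
    intro k hk ω
    rw [hW, Sfd]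
    refine Finset.sum_congr rfl fun i hi => ?_
    simp only [Finset.mem_range] at hi
    show ξ (((i : ℕ) : Fin p) : ℕ) ω = ξ i ω
    congr 1
    simp [Fin.val_natCast, Nat.mod_eq_of_lt (by omega : i < p)]
  have hzeta : {ω | ζ ω = p} = J ⁻¹' B := by
    ext ω
    simp only [Set.mem_setOf_eq, Set.mem_preimage, hB, Set.mem_setOf_eq]
    rw [hSfW p le_rfl]
    have hSfk : ∀ k < p, Sfd k (J ω) = W k ω := fun k hk => hSfW k (le_of_lt hk) ω
    constructor
    · intro h
      have hne : {n : ℕ | W n ω = -1}.Nonempty := by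
        by_contra hc
        rw [Set.not_nonempty_iff_eq_empty] at hc
        rw [hζ, hc] at h
        simp at h; omega
      have hmem : p ∈ {n : ℕ | W n ω = -1} := by
        have := Nat.sInf_mem hne
        rw [← hζ, h] at this
        exact this
      refine ⟨hmem, fun k hk => ?_⟩
      rw [hSfk k hk]
      intro hcon
      have hk2 : k ∈ {n : ℕ | W n ω = -1} := hcon
      have := Nat.sInf_le hk2
      rw [← hζ, h] at this; omega
    · rintro ⟨h1, h2⟩
      rw [hζ]
      have hmem : p ∈ {n : ℕ | W n ω = -1} := h1
      refine le_antisymm (Nat.sInf_le hmem) ?_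
      by_contra hc
      push_neg at hc
      have hin := Nat.sInf_mem ⟨p, hmem⟩
      have := h2 _ hc
      rw [hSfk _ hc] at this
      exact this hin
  have hWp : {ω | W p ω = -1} = J ⁻¹' C := by
    ext ω
    simp only [Set.mem_setOf_eq, Set.mem_preimage, hC, Set.mem_setOf_eq, hSfW p le_rfl]
  -- G has full measure
  have hGc : μ Gᶜ = 0 := by
    have hsub : Gᶜ ⊆ ⋃ i : Fin p, (fun x : Fin p → ℤ => x i) ⁻¹' {k : ℤ | k < -1} := by
      intro x hx
      simp only [hG, Set.mem_compl_iff, Set.mem_setOf_eq, not_forall] at hx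
      obtain ⟨i, hi⟩ := hx
      exact Set.mem_iUnion.mpr ⟨i, by simp only [Set.mem_preimage, Set.mem_setOf_eq]; omega⟩
    refine measure_mono_null hsub (measure_iUnion_null fun i => ?_)
    rw [hμ, Measure.map_apply hJmeas (mall _)]
    have heq : J ⁻¹' ((fun x : Fin p → ℤ => x i) ⁻¹' {k : ℤ | k < -1}) =
        ξ i.val ⁻¹' {k : ℤ | k < -1} := rfl
    rw [heq, ← Measure.map_apply (hmeas i.val), hdist]
    · exact hν
    · exact {k : ℤ | k < -1}.to_countable.measurableSet
  -- rotations
  set rot : Fin p → (Fin p → ℤ) → (Fin p → ℤ) := fun j x i => x (i + j) with hrotdef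
  have hrotB : ∀ j : Fin p, μ (rot j ⁻¹' B) = μ B := by
    intro j
    have heq : rot j = fun x : Fin p → ℤ => x ∘ (Equiv.addRight j) := rfl
    rw [heq, hrotinv]
  -- membership of rotation in B implies x ∈ C
  have hkey : ∀ (x : Fin p → ℤ) (j : Fin p), rot j x ∈ B → Sfd p x = -1 := by
    intro x j hj
    rw [hB] at hj
    obtain ⟨h1, _⟩ := hj
    have : Sfd p (rot j x) = Sfd (j.val + p) x - Sfd j.val x := Sfd_rot j p x
    rw [Sfd_per] at this
    rw [h1] at this
    omega
  -- decomposition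
  have hdecomp : C ∩ G = ⋃ j : Fin p, (rot j ⁻¹' B ∩ G) := by
    ext x
    simp only [Set.mem_inter_iff, Set.mem_iUnion, Set.mem_preimage]
    constructor
    · rintro ⟨hxC, hxG⟩
      rw [hC] at hxC
      rw [hG] at hxG
      obtain ⟨j, hj, _⟩ := exists_unique_rot x hxG hxC
      exact ⟨j, by rw [hB]; exact hj, hxG⟩
    · rintro ⟨j, hjB, hxG⟩
      exact ⟨hkey x j hjB, hxG⟩
  have hdisj : Pairwise (Function.onFun Disjoint fun j : Fin p => rot j ⁻¹' B ∩ G) := by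
    intro j j' hne
    rw [Function.onFun, Set.disjoint_left]
    rintro x ⟨hj, hxG⟩ ⟨hj', _⟩
    apply hne
    rw [hG] at hxG
    have hxC := hkey x j hj
    obtain ⟨j₀, _, hu⟩ := exists_unique_rot x hxG hxC
    have e1 : j = j₀ := hu j (by rw [hB] at hj; exact hj)
    have e2 : j' = j₀ := hu j' (by rw [hB] at hj'; exact hj')
    rw [e1, e2]
  -- measure bookkeeping
  have h1 : P {ω | ζ ω = p} = μ B := by
    rw [hzeta, hμ, Measure.map_apply hJmeas (mall _)]
  have h2 : P {ω | W p ω = -1} = μ C := by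
    rw [hWp, hμ, Measure.map_apply hJmeas (mall _)]
  have hCG : μ C = μ (C ∩ G) := by
    rw [← measure_inter_add_diff C (mall G),
      measure_mono_null (fun x (hx : x ∈ C \ G) => hx.2) hGc, add_zero]
  have hBG : ∀ j : Fin p, μ (rot j ⁻¹' B ∩ G) = μ (rot j ⁻¹' B) := by
    intro j
    rw [← measure_inter_add_diff (rot j ⁻¹' B) (mall G),
      measure_mono_null (fun x (hx : x ∈ rot j ⁻¹' B \ G) => hx.2) hGc, add_zero]
  have hfinal : μ C = (p : ENNReal) * μ B := by
    rw [hCG, hdecomp, measure_iUnion hdisj (fun j => mall _), tsum_fintype]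
    have : ∀ j : Fin p, μ (rot j ⁻¹' B ∩ G) = μ B := fun j => by rw [hBG j, hrotB j]
    rw [Finset.sum_congr rfl (fun j _ => this j), Finset.sum_const, Finset.card_univ,
      Fintype.card_fin, nsmul_eq_mul]
  rw [h1, h2, hfinal]
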